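/- Let R be a commutative (possibly non-unital) ring with a filtration by ideals R = R_1 ⊇ ... ⊇ R_{n+1} = {0} with R_q·R_k ⊆ R_{q+k}, suppose Tor(R_k/R_{k+1}, ℤ/m) = 0 for all k, and suppose m is coprime to n!. Let p_n(x) = Σ_{k=1}^{n} (-1)^{k-1} (ℓ(n)/k) m^{n-k} x^k with ℓ(n) = lcm(1,...,n). If a, b ∈ R satisfy p_n(a) − p_n(b) ∈ m^n·R, then there exists h ∈ R with a = b + m·h + b·h. -/

import Mathlib

/-- `ℓ(n) = lcm(1,…,n)`. -/
def lcmN (n : ℕ) : ℕ := (Finset.Icc 1 n).lcm id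

/-- `npow1 a j = a^{j+1}` in a non-unital ring. -/
def npow1 {R : Type*} [NonUnitalCommRing R] (a : R) : ℕ → R
  | 0 => a
  | j + 1 => npow1 a j * a

/-- Evaluation of `p_n(x) = ∑_{k=1}^n (-1)^{k-1} (ℓ(n)/k) m^{n-k} x^k` at `a` in a
non-unital ring (note the constant term vanishes). -/
def pEval {R : Type*} [NonUnitalCommRing R] (m : ℕ) (n : ℕ) (a : R) : R :=
  ∑ k ∈ Finset.Icc 1 n,
    ((-1 : ℤ) ^ (k - 1) * ((lcmN n / k : ℕ) : ℤ) * (m : ℤ) ^ (n - k)) • npow1 a (k - 1)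

namespace Stmt15Aux
open Finset MvPolynomial

/-! ### Polynomial preliminaries -/

/-- integer coefficient of `p_n` -/
def cQ (m n k : ℕ) : ℤ := (-1)^(k-1) * ((lcmN n / k : ℕ) : ℤ) * (m:ℤ)^(n-k)

variable {A : Type*} [CommRing A] {B : Type*} [CommRing B]

def qq (m n : ℕ) (t : A) : A := ∑ k ∈ Icc 1 n, (cQ m n k : A) * t^k

def EE (m n : ℕ) (x y : A) : A :=
  qq m n (x + (m:A)*y + x*y) - qq m n x - (m:A)^n * qq 1 n y

def gq (m n : ℕ) (t : A) : A :=
  ∑ k ∈ Icc 1 n, (((-1:ℤ)^(k-1) * (m:ℤ)^(n-k) : ℤ) : A) * t^(k-1)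

theorem hom_qq (φ : A →+* B) (m n : ℕ) (t : A) : φ (qq m n t) = qq m n (φ t) := by
  simp [qq, map_sum]

theorem hom_EE (φ : A →+* B) (m n : ℕ) (x y : A) : φ (EE m n x y) = EE m n (φ x) (φ y) := by
  simp [EE, map_sum, hom_qq]

theorem telescope (m n : ℕ) (t : A) : ((m:A) + t) * gq m n t = (m:A)^n - (-t)^n := by
  have h := geom_sum₂_mul (-t) ((m:A)) n
  have hg : gq m n t = ∑ i ∈ range n, (-t) ^ i * (m:A) ^ (n - 1 - i) := by
    rw [gq, ← Finset.Ico_add_one_right_eq_Icc, Finset.sum_Ico_eq_sum_range]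
    simp only [Nat.add_sub_cancel_left]
    refine Finset.sum_congr rfl fun i hi => ?_
    have : n - (1 + i) = n - 1 - i := by omega
    push_cast
    rw [neg_pow, this]
    ring_nf
  rw [hg]
  have h2 : ((m:A) + t) * ∑ i ∈ range n, (-t) ^ i * (m:A) ^ (n - 1 - i)
      = -((∑ i ∈ range n, (-t) ^ i * (m:A) ^ (n - 1 - i)) * (-t - (m:A))) := by ring
  rw [h2, h]
  ring

/-! ### Low-degree coefficient machinery -/

/-- All monomials of `f` have total degree `≥ k`. -/
def Mlow (k : ℕ) (f : MvPolynomial (Fin 2) A) : Prop :=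
  ∀ d : Fin 2 →₀ ℕ, d 0 + d 1 < k → coeff d f = 0

theorem Mlow.mono {j k : ℕ} (h : j ≤ k) {f : MvPolynomial (Fin 2) A} (hf : Mlow k f) :
    Mlow j f := fun d hd => hf d (lt_of_lt_of_le hd h)

theorem Mlow_zero (k : ℕ) : Mlow k (0 : MvPolynomial (Fin 2) A) := by simp [Mlow]

theorem Mlow.add {k : ℕ} {f g : MvPolynomial (Fin 2) A} (hf : Mlow k f) (hg : Mlow k g) :
    Mlow k (f + g) := fun d hd => by simp [coeff_add, hf d hd, hg d hd]

theorem Mlow.neg {k : ℕ} {f : MvPolynomial (Fin 2) A} (hf : Mlow k f) :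
    Mlow k (-f) := fun d hd => by simp [hf d hd]

theorem Mlow.sub {k : ℕ} {f g : MvPolynomial (Fin 2) A} (hf : Mlow k f) (hg : Mlow k g) :
    Mlow k (f - g) := by rw [sub_eq_add_neg]; exact hf.add hg.neg

theorem Mlow.sum {k : ℕ} {s : Finset ℕ} {f : ℕ → MvPolynomial (Fin 2) A}
    (hf : ∀ i ∈ s, Mlow k (f i)) : Mlow k (∑ i ∈ s, f i) := by
  classical
  induction s using Finset.induction_on with
  | empty => simpa using Mlow_zero k
  | insert _ _ hx ih =>
      rw [Finset.sum_insert hx]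
      exact (hf _ (Finset.mem_insert_self _ _)).add
        (ih fun i hi => hf i (Finset.mem_insert_of_mem hi))

theorem Mlow.mul {j k : ℕ} {f g : MvPolynomial (Fin 2) A} (hf : Mlow j f) (hg : Mlow k g) :
    Mlow (j + k) (f * g) := by
  intro d hd
  rw [coeff_mul]
  refine Finset.sum_eq_zero fun x hx => ?_
  rw [Finset.HasAntidiagonal.mem_antidiagonal] at hx
  have hsum : x.1 0 + x.1 1 + (x.2 0 + x.2 1) = d 0 + d 1 := by
    rw [← hx]; simp; omega
  rcases lt_or_ge (x.1 0 + x.1 1) j with h1 | h1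
  · rw [hf _ h1, zero_mul]
  · rw [hg _ (by omega), mul_zero]

theorem Mlow.mul_left {k : ℕ} (c : MvPolynomial (Fin 2) A) {g : MvPolynomial (Fin 2) A}
    (hg : Mlow k g) : Mlow k (c * g) := by
  intro d hd
  rw [coeff_mul]
  refine Finset.sum_eq_zero fun x hx => ?_
  rw [Finset.HasAntidiagonal.mem_antidiagonal] at hx
  have hsum : x.1 0 + x.1 1 + (x.2 0 + x.2 1) = d 0 + d 1 := by
    rw [← hx]; simp; omega
  rw [hg _ (by omega), mul_zero]

theorem Mlow.pow {f : MvPolynomial (Fin 2) A} (hf : Mlow 1 f) (k : ℕ) : Mlow k (f ^ k) := by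
  induction k with
  | zero => intro d hd; omega
  | succ k ih => rw [pow_succ]; exact ih.mul hf

theorem Mlow.pow_le {f : MvPolynomial (Fin 2) A} (hf : Mlow 1 f) {j k : ℕ} (hjk : j ≤ k) :
    Mlow j (f ^ k) := (hf.pow k).mono hjk

theorem fin2_cases (i : Fin 2) : i = 0 ∨ i = 1 := by
  fin_cases i
  · exact Or.inl rfl
  · exact Or.inr rfl

theorem Mlow_one_of {f : MvPolynomial (Fin 2) A} (h : coeff 0 f = 0) : Mlow 1 f := by
  intro d hd
  have hd0 : d 0 = 0 := by omega
  have hd1 : d 1 = 0 := by omega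
  have : d = 0 := by
    ext j
    fin_cases j
    · exact hd0
    · exact hd1
  rwa [this]

/-- coefficient of a partial derivative -/
theorem coeff_pderiv (i : Fin 2) (u : Fin 2 →₀ ℕ) (f : MvPolynomial (Fin 2) A) :
    coeff u (pderiv i f) = (u i + 1 : ℕ) • coeff (u + Finsupp.single i 1) f := by
  induction f using MvPolynomial.induction_on' with
  | monomial s a =>
      rw [pderiv_monomial, coeff_monomial, coeff_monomial]
      by_cases hs : s = u + Finsupp.single i 1
      · have hsi : s i = u i + 1 := by simp [hs]
        have hsub : s - Finsupp.single i 1 = u := by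
          ext j
          by_cases hj : j = i
          · subst hj; simp [hsi]
          · simp [hs, Finsupp.single_apply, Ne.symm hj, hj]
        rw [if_pos hsub, if_pos hs, hsi, nsmul_eq_mul]
        push_cast
        ring
      · rw [if_neg hs, smul_zero]
        by_cases hz : s i = 0
        · by_cases h2 : s - Finsupp.single i 1 = u
          · simp [h2, hz]
          · simp [h2]
        · have h2 : s - Finsupp.single i 1 ≠ u := by
            intro h
            apply hs
            ext j
            by_cases hj : j = i
            · subst hj
              have := congrArg (fun v => v j) h
              simp [Finsupp.sub_apply, Finsupp.single_apply] at this ⊢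
              omega
            · have := congrArg (fun v => v j) h
              simp [Finsupp.sub_apply, Finsupp.single_apply, hj, Ne.symm hj] at this ⊢
              omega
          simp [h2]
  | add p q hp hq => simp [hp, hq, map_add, mul_add, smul_add]

/-! ### derivative of qq -/

theorem cQ_mul_self (m n k : ℕ) (hk : k ∈ Icc 1 n) :
    cQ m n k * k = (lcmN n : ℤ) * ((-1:ℤ)^(k-1) * (m:ℤ)^(n-k)) := by
  have hdvd : k ∣ lcmN n := by
    have := Finset.dvd_lcm (f := id) (s := Icc 1 n) hk
    simpa [lcmN] using this
  have key : ((lcmN n / k : ℕ) : ℤ) * (k:ℤ) = (lcmN n : ℤ) := by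
    rw [← Nat.cast_mul, Nat.div_mul_cancel hdvd]
  calc cQ m n k * k
      = (-1:ℤ)^(k-1) * (m:ℤ)^(n-k) * (((lcmN n / k : ℕ):ℤ) * k) := by rw [cQ]; ring
    _ = (-1:ℤ)^(k-1) * (m:ℤ)^(n-k) * (lcmN n : ℤ) := by rw [key]
    _ = _ := by ring

theorem pderiv_qq (m n : ℕ) (i : Fin 2) (f : MvPolynomial (Fin 2) ℚ) :
    pderiv i (qq m n f) = (lcmN n : MvPolynomial (Fin 2) ℚ) * (gq m n f * pderiv i f) := by
  rw [qq, map_sum, gq, Finset.sum_mul, Finset.mul_sum]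
  refine Finset.sum_congr rfl fun k hk => ?_
  have h1 : ((cQ m n k : ℤ) : MvPolynomial (Fin 2) ℚ) = C ((cQ m n k : ℤ) : ℚ) := rfl
  have h2 : ((lcmN n : ℕ) : MvPolynomial (Fin 2) ℚ) = C ((lcmN n : ℕ) : ℚ) := rfl
  have h3 : (((-1:ℤ)^(k-1) * (m:ℤ)^(n-k) : ℤ) : MvPolynomial (Fin 2) ℚ)
      = C (((-1:ℤ)^(k-1) * (m:ℤ)^(n-k) : ℤ) : ℚ) := rfl
  rw [h1, pderiv_C_mul, pderiv_pow, h2, h3, show ((k:ℕ) : MvPolynomial (Fin 2) ℚ) = C (k:ℚ) from rfl]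
  have hck : (C ((cQ m n k : ℤ) : ℚ) * C (k:ℚ) : MvPolynomial (Fin 2) ℚ)
      = C ((lcmN n : ℕ) : ℚ) * C ((((-1:ℤ)^(k-1) * (m:ℤ)^(n-k) : ℤ)) : ℚ) := by
    rw [← map_mul, ← map_mul]
    congr 1
    have h2 : ((cQ m n k * k : ℤ) : ℚ) = (((lcmN n:ℤ) * ((-1:ℤ)^(k-1) * (m:ℤ)^(n-k)) : ℤ) : ℚ) := by
      exact_mod_cast congrArg (fun z : ℤ => (z : ℚ)) (cQ_mul_self m n k hk)
    push_cast at h2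
    push_cast
    linear_combination h2
  linear_combination (f ^ (k-1) * pderiv i f) * hck

/-! ### the key vanishing result over ℚ -/

theorem cancel {c : ℚ} (hc : c ≠ 0) (i : Fin 2) {P Q : MvPolynomial (Fin 2) ℚ} {k : ℕ}
    (h : (C c + X i) * P = Q) (hQ : Mlow k Q) : Mlow k P := by
  suffices H : ∀ s : ℕ, ∀ d : Fin 2 →₀ ℕ, d 0 + d 1 = s → d 0 + d 1 < k → coeff d P = 0 by
    intro d hd; exact H _ d rfl hd
  intro s
  induction s using Nat.strong_induction_on with
  | _ s ih =>
    intro d hds hdk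
    have hQd : coeff d Q = 0 := hQ d hdk
    rw [← h, add_mul, coeff_add, coeff_C_mul, mul_comm (X i) P, coeff_mul_X'] at hQd
    by_cases hi : i ∈ d.support
    · rw [if_pos hi] at hQd
      have hdi : 1 ≤ d i := by
        rcases Finsupp.mem_support_iff.mp hi with hne
        omega
      have hsum : (d - Finsupp.single i 1 : Fin 2 →₀ ℕ) 0 + (d - Finsupp.single i 1 : Fin 2 →₀ ℕ) 1 + 1 = d 0 + d 1 := by
        rcases fin2_cases i with rfl | rfl <;>
          simp [Finsupp.sub_apply, Finsupp.single_apply] <;> omega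
      have hz : coeff (d - Finsupp.single i 1) P = 0 := by
        refine ih (s - 1) (by omega) _ (by omega) (by omega)
      rw [hz, add_zero] at hQd
      exact (mul_eq_zero.mp hQd).resolve_left hc
    · rw [if_neg hi, add_zero] at hQd
      exact (mul_eq_zero.mp hQd).resolve_left hc

theorem Mlow_one_qq (m n : ℕ) {t : MvPolynomial (Fin 2) ℚ} (ht : Mlow 1 t) :
    Mlow 1 (qq m n t) := by
  refine Mlow.sum fun k hk => ?_
  exact Mlow.mul_left _ (ht.pow_le (Finset.mem_Icc.mp hk).1)

theorem Mlow_one_X (i : Fin 2) : Mlow 1 (X i : MvPolynomial (Fin 2) ℚ) :=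
  Mlow_one_of (by simp)

theorem Mlow_one_W (m n : ℕ) :
    Mlow 1 ((X 0 + (m : MvPolynomial (Fin 2) ℚ) * X 1 + X 0 * X 1)) := by
  refine ((Mlow_one_X 0).add ?_).add ?_
  · exact Mlow.mul_left _ (Mlow_one_X 1)
  · exact Mlow.mul_left _ (Mlow_one_X 1)

theorem Mlow_one_E (m n : ℕ) :
    Mlow 1 (EE m n (X 0) (X 1) : MvPolynomial (Fin 2) ℚ) := by
  rw [EE]
  refine ((Mlow_one_qq m n (Mlow_one_W m n)).sub (Mlow_one_qq m n (Mlow_one_X 0))).sub ?_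
  exact Mlow.mul_left _ (Mlow_one_qq 1 n (Mlow_one_X 1))

theorem pderiv0_W (m : ℕ) :
    pderiv 0 (X 0 + (m : MvPolynomial (Fin 2) ℚ) * X 1 + X 0 * X 1) = 1 + X 1 := by
  rw [show ((m:ℕ) : MvPolynomial (Fin 2) ℚ) = C (m:ℚ) from rfl]
  simp [pderiv_mul]

theorem pderiv1_W (m : ℕ) :
    pderiv 1 (X 0 + (m : MvPolynomial (Fin 2) ℚ) * X 1 + X 0 * X 1)
      = (m : MvPolynomial (Fin 2) ℚ) + X 0 := by
  rw [show ((m:ℕ) : MvPolynomial (Fin 2) ℚ) = C (m:ℚ) from rfl]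
  simp [pderiv_mul]

theorem pd0_eq (m n : ℕ) :
    (C (m:ℚ) + X 0) * pderiv 0 (EE m n (X 0) (X 1) : MvPolynomial (Fin 2) ℚ)
      = (lcmN n : MvPolynomial (Fin 2) ℚ) *
        ((-(X 0))^n - (-(X 0 + (m : MvPolynomial (Fin 2) ℚ) * X 1 + X 0 * X 1))^n) := by
  have hCn : ((m : MvPolynomial (Fin 2) ℚ))^n = C ((m:ℚ)^n) := by
    rw [map_pow]; rfl
  rw [EE, map_sub, map_sub, hCn, pderiv_C_mul, pderiv_qq, pderiv_qq, pderiv_qq,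
    pderiv0_W, pderiv_X_self, show pderiv 0 (X 1 : MvPolynomial (Fin 2) ℚ) = 0 from
      pderiv_X_of_ne (by decide), show (C (m:ℚ) : MvPolynomial (Fin 2) ℚ) = (m:ℕ) from rfl]
  have t1 := telescope m n (X 0 + (m : MvPolynomial (Fin 2) ℚ) * X 1 + X 0 * X 1)
  have t2 := telescope m n (X 0 : MvPolynomial (Fin 2) ℚ)
  linear_combination (lcmN n : MvPolynomial (Fin 2) ℚ) * t1
    - (lcmN n : MvPolynomial (Fin 2) ℚ) * t2

theorem pd1_eq (m n : ℕ) :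
    (C (1:ℚ) + X 1) * pderiv 1 (EE m n (X 0) (X 1) : MvPolynomial (Fin 2) ℚ)
      = (lcmN n : MvPolynomial (Fin 2) ℚ) *
        ((m : MvPolynomial (Fin 2) ℚ)^n * (-(X 1))^n
          - (-(X 0 + (m : MvPolynomial (Fin 2) ℚ) * X 1 + X 0 * X 1))^n) := by
  have hCn : ((m : MvPolynomial (Fin 2) ℚ))^n = C ((m:ℚ)^n) := by
    rw [map_pow]; rfl
  rw [EE, map_sub, map_sub, hCn, pderiv_C_mul, pderiv_qq, pderiv_qq, pderiv_qq,
    pderiv1_W, pderiv_X_self, show pderiv 1 (X 0 : MvPolynomial (Fin 2) ℚ) = 0 from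
      pderiv_X_of_ne (by decide), show (C (1:ℚ) : MvPolynomial (Fin 2) ℚ) = ((1:ℕ):MvPolynomial (Fin 2) ℚ) from by push_cast; rfl]
  have t1 := telescope m n (X 0 + (m : MvPolynomial (Fin 2) ℚ) * X 1 + X 0 * X 1)
  have t3 := telescope 1 n (X 1 : MvPolynomial (Fin 2) ℚ)
  rw [← hCn]
  linear_combination (lcmN n : MvPolynomial (Fin 2) ℚ) * t1
    - (lcmN n : MvPolynomial (Fin 2) ℚ) * ((m : MvPolynomial (Fin 2) ℚ))^n * t3

theorem Evanish (m n : ℕ) (hm : 1 ≤ m) (hn : 1 ≤ n) (d : Fin 2 →₀ ℕ) (hd : d 0 + d 1 ≤ n) :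
    coeff d (EE m n (X 0) (X 1) : MvPolynomial (Fin 2) ℚ) = 0 := by
  have hMW : Mlow 1 ((X 0 + (m : MvPolynomial (Fin 2) ℚ) * X 1 + X 0 * X 1)) := Mlow_one_W m n
  have hpd0 : Mlow n (pderiv 0 (EE m n (X 0) (X 1) : MvPolynomial (Fin 2) ℚ)) := by
    have hmne : ((m:ℕ):ℚ) ≠ 0 := by
      have : (0:ℚ) < (m:ℚ) := by exact_mod_cast hm
      exact this.ne'
    refine cancel hmne 0 (pd0_eq m n) ?_
    exact Mlow.mul_left _ ((((Mlow_one_X 0).neg).pow_le le_rfl).sub ((hMW.neg).pow_le le_rfl))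
  have hpd1 : Mlow n (pderiv 1 (EE m n (X 0) (X 1) : MvPolynomial (Fin 2) ℚ)) := by
    refine cancel (c := (1:ℚ)) one_ne_zero 1 (pd1_eq m n) ?_
    exact Mlow.mul_left _ ((Mlow.mul_left _ (((Mlow_one_X 1).neg).pow_le le_rfl)).sub
      ((hMW.neg).pow_le le_rfl))
  rcases Nat.eq_zero_or_pos (d 0 + d 1) with h0 | hpos
  · exact Mlow_one_E m n d (by omega)
  · have : ∃ i : Fin 2, 1 ≤ d i := by
      by_contra hcon
      push_neg at hcon
      have := hcon 0
      have := hcon 1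
      omega
    obtain ⟨i, hi⟩ := this
    set u := d - Finsupp.single i 1 with hu
    have hud : u + Finsupp.single i 1 = d := by
      ext j
      by_cases hj : j = i
      · subst hj; simp [hu, Finsupp.sub_apply, Finsupp.single_apply]; omega
      · simp [hu, Finsupp.sub_apply, Finsupp.single_apply, Ne.symm hj, hj]
    have husum : u 0 + u 1 + 1 = d 0 + d 1 := by
      rcases fin2_cases i with rfl | rfl <;>
        simp [hu, Finsupp.sub_apply, Finsupp.single_apply] <;> omega
    have hcu : coeff u (pderiv i (EE m n (X 0) (X 1) : MvPolynomial (Fin 2) ℚ)) = 0 := by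
      rcases fin2_cases i with rfl | rfl
      · exact hpd0 u (by omega)
      · exact hpd1 u (by omega)
    rw [coeff_pderiv, hud] at hcu
    have : ((u i + 1 : ℕ) : ℚ) ≠ 0 := by positivity
    rw [nsmul_eq_mul] at hcu
    exact (mul_eq_zero.mp hcu).resolve_left this

/-! ### evaluation -/

theorem EE_eq_zero (m n : ℕ) (hm : 1 ≤ m) (hn : 1 ≤ n) (X' Y' : B)
    (hvan : ∀ i j : ℕ, i + j = n + 1 → X'^i * Y'^j = 0) : EE m n X' Y' = 0 := by
  set Ez : MvPolynomial (Fin 2) ℤ := EE m n (X 0) (X 1) with hEz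
  have hmap : MvPolynomial.map (Int.castRingHom ℚ) Ez = EE m n (X 0) (X 1) := by
    rw [hEz, hom_EE]
    simp
  have hsupp : ∀ d ∈ Ez.support, n + 1 ≤ d 0 + d 1 := by
    intro d hd
    by_contra hcon
    push_neg at hcon
    have h1 : coeff d Ez = 0 := by
      have h2 : ((coeff d Ez : ℤ) : ℚ) = coeff d (MvPolynomial.map (Int.castRingHom ℚ) Ez) := by
        rw [coeff_map]; rfl
      rw [hmap, Evanish m n hm hn d (by omega)] at h2
      exact_mod_cast h2
    exact (MvPolynomial.mem_support_iff.mp hd) h1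
  have hvan' : ∀ d : Fin 2 →₀ ℕ, n + 1 ≤ d 0 + d 1 → X'^(d 0) * Y'^(d 1) = 0 := by
    intro d hd
    set i := min (d 0) (n+1) with hi
    set j := n + 1 - i with hj
    have hij : i + j = n + 1 := by omega
    have hid : i ≤ d 0 := by omega
    have hjd : j ≤ d 1 := by omega
    have hsplit : X'^(d 0) * Y'^(d 1) = (X'^i * X'^(d 0 - i)) * (Y'^j * Y'^(d 1 - j)) := by
      rw [← pow_add, ← pow_add, Nat.add_sub_cancel' hid, Nat.add_sub_cancel' hjd]
    have h2 : (X'^i * X'^(d 0 - i)) * (Y'^j * Y'^(d 1 - j))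
        = (X'^i * Y'^j) * (X'^(d 0 - i) * Y'^(d 1 - j)) := by ring
    rw [hsplit, h2, hvan i j hij, zero_mul]
  have haev : (aeval (R := ℤ) ![X', Y'] : MvPolynomial (Fin 2) ℤ →ₐ[ℤ] B) Ez = 0 := by
    rw [aeval_def, eval₂_eq]
    refine Finset.sum_eq_zero fun d hd => ?_
    have hprod : (∏ i ∈ d.support, (![X', Y'] : Fin 2 → B) i ^ d i)
        = X'^(d 0) * Y'^(d 1) := by
      rw [Finset.prod_subset (Finset.subset_univ d.support) (fun i _ hi => by
        rw [Finsupp.notMem_support_iff.mp hi, pow_zero])]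
      rw [Fin.prod_univ_two]
      rfl
    rw [hprod, hvan' d (hsupp d hd), mul_zero]
  have haev2 : (aeval (R := ℤ) ![X', Y'] : MvPolynomial (Fin 2) ℤ →ₐ[ℤ] B) Ez
      = EE m n X' Y' := by
    rw [hEz]
    have := hom_EE ((aeval (R := ℤ) ![X', Y'] : MvPolynomial (Fin 2) ℤ →ₐ[ℤ] B) : MvPolynomial (Fin 2) ℤ →+* B) m n (X 0) (X 1)
    simpa using this
  rw [← haev2, haev]

end Stmt15Aux

open Stmt15Aux

/-! ### ring-theoretic part -/

section RingPart

variable {R : Type*} [NonUnitalCommRing R]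

theorem npow1_succ (a : R) (j : ℕ) : npow1 a (j+1) = npow1 a j * a := rfl

theorem pEval_eq (m n : ℕ) (a : R) :
    pEval m n a = ∑ k ∈ Finset.Icc 1 n, (cQ m n k) • npow1 a (k - 1) := rfl

/-- `inr` as an additive monoid hom -/
def inrHom' (R : Type*) [NonUnitalCommRing R] : R →+ Unitization ℤ R where
  toFun := Unitization.inr
  map_zero' := Unitization.inr_zero ℤ
  map_add' := Unitization.inr_add ℤ

theorem inr_npow1 (a : R) (i : ℕ) :
    ((npow1 a i : R) : Unitization ℤ R) = (a : Unitization ℤ R)^(i+1) := by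
  induction i with
  | zero => simp [npow1]
  | succ i ih => rw [npow1_succ, pow_succ, ← ih, Unitization.inr_mul]

theorem inr_qq (mm n : ℕ) (x : R) :
    ((pEval mm n x : R) : Unitization ℤ R) = qq mm n (x : Unitization ℤ R) := by
  rw [pEval_eq, qq]
  rw [show ((((∑ k ∈ Finset.Icc 1 n, (cQ mm n k) • npow1 x (k - 1)) : R)) : Unitization ℤ R)
      = inrHom' R (∑ k ∈ Finset.Icc 1 n, (cQ mm n k) • npow1 x (k - 1)) from rfl, map_sum]
  refine Finset.sum_congr rfl fun k hk => ?_
  have hk1 : 1 ≤ k := (Finset.mem_Icc.mp hk).1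
  have : inrHom' R ((cQ mm n k) • npow1 x (k-1)) = (cQ mm n k) • ((npow1 x (k-1) : R) : Unitization ℤ R) := by
    show ((((cQ mm n k) • npow1 x (k-1) : R)) : Unitization ℤ R) = _
    rw [Unitization.inr_smul]
  rw [this, inr_npow1]
  have hkk : k - 1 + 1 = k := by omega
  rw [hkk, zsmul_eq_mul]

end RingPart

section Main

variable {R : Type*} [NonUnitalCommRing R]

theorem npow1_mem (F : ℕ → AddSubgroup R) (htop : F 1 = ⊤)
    (hmul : ∀ q k, 1 ≤ q → 1 ≤ k → ∀ x ∈ F q, ∀ y ∈ F k, x * y ∈ F (q + k))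
    (x : R) : ∀ j, npow1 x j ∈ F (j + 1) := by
  intro j
  induction j with
  | zero => rw [htop]; trivial
  | succ j ih =>
      have hx1 : x ∈ F 1 := by rw [htop]; trivial
      exact hmul (j+1) 1 (by omega) le_rfl _ ih _ hx1

theorem Fanti (F : ℕ → AddSubgroup R) (hmono : ∀ k, 1 ≤ k → F (k + 1) ≤ F k) :
    ∀ i j, 1 ≤ i → i ≤ j → F j ≤ F i := by
  intro i j h1 hij
  induction j, hij using Nat.le_induction with
  | base => exact le_rfl
  | succ j hj ih => exact le_trans (hmono j (by omega)) ih

theorem diff_npow1 (F : ℕ → AddSubgroup R) (htop : F 1 = ⊤)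
    (hmul : ∀ q k, 1 ≤ q → 1 ≤ k → ∀ x ∈ F q, ∀ y ∈ F k, x * y ∈ F (q + k))
    {c : ℕ} (hc : 1 ≤ c) :
    ∀ j (x y : R), x - y ∈ F c → npow1 x j - npow1 y j ∈ F (c + j) := by
  intro j
  induction j with
  | zero => intro x y hxy; simpa [npow1] using hxy
  | succ j ih =>
      intro x y hxy
      have hx1 : x ∈ F 1 := by rw [htop]; trivial
      have hkey : npow1 x (j+1) - npow1 y (j+1)
          = (npow1 x j - npow1 y j) * x + npow1 y j * (x - y) := by
        rw [npow1_succ, npow1_succ]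
        rw [sub_mul, mul_sub]
        abel
      rw [hkey]
      refine AddSubgroup.add_mem _ ?_ ?_
      · have := hmul (c+j) 1 (by omega) le_rfl _ (ih x y hxy) _ hx1
        rwa [show c + j + 1 = c + (j+1) from by omega] at this
      · have := hmul (j+1) c (by omega) hc _ (npow1_mem F htop hmul y j) _ hxy
        rwa [show j + 1 + c = c + (j+1) from by omega] at this

theorem claim2 (n : ℕ) (hn : 1 ≤ n) (F : ℕ → AddSubgroup R) (htop : F 1 = ⊤)
    (hmono : ∀ k, 1 ≤ k → F (k + 1) ≤ F k)
    (hmul : ∀ q k, 1 ≤ q → 1 ≤ k → ∀ x ∈ F q, ∀ y ∈ F k, x * y ∈ F (q + k))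
    (m : ℕ) {k : ℕ} (hk : 1 ≤ k) {x e : R} (he : e ∈ F k) :
    pEval m n (x + e) - pEval m n x - ((lcmN n : ℤ) * (m:ℤ)^(n-1)) • e ∈ F (k+1) := by
  have h1mem : (1:ℕ) ∈ Finset.Icc 1 n := Finset.mem_Icc.mpr ⟨le_rfl, hn⟩
  have hsum : pEval m n (x + e) - pEval m n x
      = ∑ j ∈ Finset.Icc 1 n, (cQ m n j) • (npow1 (x+e) (j-1) - npow1 x (j-1)) := by
    rw [pEval_eq, pEval_eq, ← Finset.sum_sub_distrib]
    exact Finset.sum_congr rfl fun j _ => (smul_sub _ _ _).symm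
  rw [hsum, ← Finset.add_sum_erase _ _ h1mem]
  have hc1 : cQ m n 1 = (lcmN n : ℤ) * (m:ℤ)^(n-1) := by
    rw [cQ]; simp
  have h0 : npow1 (x+e) (1-1) - npow1 x (1-1) = e := by
    show (x + e) - x = e
    abel
  rw [hc1, h0, add_sub_cancel_left]
  refine AddSubgroup.sum_mem _ fun j hj => ?_
  rw [Finset.mem_erase, Finset.mem_Icc] at hj
  have hj2 : 2 ≤ j := by omega
  refine AddSubgroup.zsmul_mem _ ?_ _
  have hmem : npow1 (x+e) (j-1) - npow1 x (j-1) ∈ F (k + (j-1)) := by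
    refine diff_npow1 F htop hmul hk (j-1) (x+e) x ?_
    simpa using he
  exact Fanti F hmono (k+1) (k + (j-1)) (by omega) (by omega) hmem

theorem claim1 (n m : ℕ) (hn : 1 ≤ n) (hm : 1 ≤ m) (F : ℕ → AddSubgroup R)
    (htop : F 1 = ⊤) (hbot : F (n + 1) = ⊥)
    (hmul : ∀ q k, 1 ≤ q → 1 ≤ k → ∀ x ∈ F q, ∀ y ∈ F k, x * y ∈ F (q + k))
    (b h : R) :
    pEval m n (b + (m:ℤ) • h + b * h) - pEval m n b = ((m:ℤ)^n) • pEval 1 n h := by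
  apply Unitization.inr_injective (R := ℤ) (A := R)
  have hvan : ∀ i j : ℕ, i + j = n + 1 →
      ((b : Unitization ℤ R))^i * ((h : Unitization ℤ R))^j = 0 := by
    intro i j hij
    rcases Nat.eq_zero_or_pos i with rfl | hi
    · rw [pow_zero, one_mul, show j = (j-1)+1 from by omega, ← inr_npow1]
      have hmem : npow1 h (j-1) ∈ F (j-1+1) := npow1_mem F htop hmul h (j-1)
      rw [show j-1+1 = n+1 from by omega, hbot] at hmem
      rw [AddSubgroup.mem_bot.mp hmem]
      exact Unitization.inr_zero ℤ
    rcases Nat.eq_zero_or_pos j with rfl | hj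
    · rw [pow_zero, mul_one, show i = (i-1)+1 from by omega, ← inr_npow1]
      have hmem : npow1 b (i-1) ∈ F (i-1+1) := npow1_mem F htop hmul b (i-1)
      rw [show i-1+1 = n+1 from by omega, hbot] at hmem
      rw [AddSubgroup.mem_bot.mp hmem]
      exact Unitization.inr_zero ℤ
    · rw [show i = (i-1)+1 from by omega, ← inr_npow1, show j = (j-1)+1 from by omega,
        ← inr_npow1, ← Unitization.inr_mul]
      have hmem : npow1 b (i-1) * npow1 h (j-1) ∈ F ((i-1+1) + (j-1+1)) :=
        hmul _ _ (by omega) (by omega) _ (npow1_mem F htop hmul b (i-1)) _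
          (npow1_mem F htop hmul h (j-1))
      rw [show (i-1+1) + (j-1+1) = n+1 from by omega, hbot] at hmem
      rw [AddSubgroup.mem_bot.mp hmem]
      exact Unitization.inr_zero ℤ
  have hEE := EE_eq_zero m n hm hn (b : Unitization ℤ R) (h : Unitization ℤ R) hvan
  rw [EE, sub_sub, sub_eq_zero] at hEE
  have hb' : ((b + (m:ℤ) • h + b * h : R) : Unitization ℤ R)
      = (b : Unitization ℤ R) + (m : Unitization ℤ R) * (h : Unitization ℤ R)
        + (b : Unitization ℤ R) * (h : Unitization ℤ R) := by
    rw [Unitization.inr_add, Unitization.inr_add, Unitization.inr_mul, Unitization.inr_smul,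
      zsmul_eq_mul]
    push_cast
    ring
  calc ((pEval m n (b + (m:ℤ) • h + b * h) - pEval m n b : R) : Unitization ℤ R)
      = qq m n ((b + (m:ℤ) • h + b * h : R) : Unitization ℤ R)
        - qq m n (b : Unitization ℤ R) := by
        have hms : ∀ x y : R, ((x - y : R) : Unitization ℤ R)
            = (x : Unitization ℤ R) - (y : Unitization ℤ R) := fun x y =>
          map_sub (inrHom' R) x y
        rw [hms, inr_qq, inr_qq]
    _ = (m : Unitization ℤ R)^n * qq 1 n (h : Unitization ℤ R) := by
        rw [hb', hEE]
        abel
    _ = (((m:ℤ)^n • pEval 1 n h : R) : Unitization ℤ R) := by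
        rw [Unitization.inr_smul, zsmul_eq_mul, inr_qq]
        show (m : Unitization ℤ R)^n * _ = (((m:ℤ)^n : ℤ) : Unitization ℤ R) * _
        push_cast
        ring

theorem lemA (n : ℕ) (F : ℕ → AddSubgroup R) (htop : F 1 = ⊤)
    (hmono : ∀ k, 1 ≤ k → F (k + 1) ≤ F k) (m : ℕ)
    (htor : ∀ k, 1 ≤ k → k ≤ n → ∀ x ∈ F k, ((m : ℤ) • x ∈ F (k + 1) → x ∈ F (k + 1))) :
    ∀ k, 1 ≤ k → k ≤ n + 1 → ∀ j (x : R), ((m:ℤ)^j) • x ∈ F k → x ∈ F k := by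
  intro k hk
  induction k, hk using Nat.le_induction with
  | base => intro _ j x _; rw [htop]; trivial
  | succ k hk ih =>
      intro hk1 j x hx
      have hxk : x ∈ F k := ih (by omega) j x (hmono k hk hx)
      have H : ∀ j' (y : R), y ∈ F k → ((m:ℤ)^j') • y ∈ F (k+1) → y ∈ F (k+1) := by
        intro j'
        induction j' with
        | zero => intro y hy h1; simpa using h1
        | succ j' ihj =>
            intro y hy h1
            rw [pow_succ, mul_comm, mul_smul] at h1
            have h2 : ((m:ℤ)^j') • ((m:ℤ) • y) ∈ F (k+1) := by
              rwa [smul_comm] at h1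
            have hmy : (m:ℤ) • y ∈ F (k+1) :=
              ihj ((m:ℤ) • y) (AddSubgroup.zsmul_mem _ hy _) h2
            exact htor k hk (by omega) y hy hmy
      exact H j x hxk hx

end Main

/-- Lemma 6.1: for a filtered commutative (possibly non-unital) ring
`R = R_1 ⊇ … ⊇ R_{n+1} = 0` with `R_q·R_k ⊆ R_{q+k}`, with all quotients `R_k/R_{k+1}`
without `m`-torsion, and `m` coprime to `n!`: if `p_n(a) − p_n(b) ∈ m^n·R`, then
`a = b + m·h + b·h` for some `h ∈ R`. -/
theorem stmt15 (R : Type*) [NonUnitalCommRing R] (n : ℕ) (hn : 1 ≤ n)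
    (F : ℕ → AddSubgroup R)
    (htop : F 1 = ⊤)
    (hmono : ∀ k, 1 ≤ k → F (k + 1) ≤ F k)
    (hbot : F (n + 1) = ⊥)
    (hmul : ∀ q k, 1 ≤ q → 1 ≤ k → ∀ x ∈ F q, ∀ y ∈ F k, x * y ∈ F (q + k))
    (m : ℕ) (hm : 1 ≤ m) (hcop : Nat.Coprime m n.factorial)
    (htor : ∀ k, 1 ≤ k → k ≤ n → ∀ x ∈ F k, ((m : ℤ) • x ∈ F (k + 1) → x ∈ F (k + 1)))
    (a b : R) (hdiv : ∃ r : R, pEval m n a - pEval m n b = ((m : ℤ) ^ n) • r) :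
    ∃ h : R, a = b + (m : ℤ) • h + b * h := by
  obtain ⟨r, hr⟩ := hdiv
  have hldvd : lcmN n ∣ n.factorial := by
    apply Finset.lcm_dvd
    intro k hk
    rw [Finset.mem_Icc] at hk
    simp only [id_eq]
    exact Nat.dvd_factorial (by omega) (by omega)
  have hcop2 : Nat.Coprime (m^n) (lcmN n) :=
    (Nat.Coprime.coprime_dvd_right hldvd hcop).pow_left _
  have hic : IsCoprime ((m:ℤ)^n) ((lcmN n : ℕ) : ℤ) := by
    rw [show ((m:ℤ)^n) = ((m^n : ℕ) : ℤ) from by push_cast; ring]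
    exact Nat.isCoprime_iff_coprime.mpr hcop2
  obtain ⟨u, v, huv⟩ := hic
  have MAIN : ∀ k, 1 ≤ k → k ≤ n + 1 → ∃ h : R, a - (b + (m:ℤ) • h + b * h) ∈ F k := by
    intro k hk
    induction k, hk using Nat.le_induction with
    | base => intro _; exact ⟨0, by rw [htop]; trivial⟩
    | succ k hk ih =>
        intro hk1
        obtain ⟨h, he⟩ := ih (by omega)
        set b' := b + (m:ℤ) • h + b * h with hb'
        set e := a - b' with heq
        have hc1 := claim1 n m hn hm F htop hbot hmul b h
        rw [← hb'] at hc1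
        have hpa : pEval m n a - pEval m n b' = ((m:ℤ)^n) • (r - pEval 1 n h) := by
          rw [smul_sub, ← hc1, ← hr]
          abel
        have hae : a = b' + e := by rw [heq]; abel
        have hc2 : pEval m n (b' + e) - pEval m n b' - ((lcmN n : ℤ) * (m:ℤ)^(n-1)) • e
            ∈ F (k+1) := claim2 n hn F htop hmono hmul m hk he
        rw [← hae] at hc2
        set t : R := (u * (m:ℤ)^(n-1)) • e + v • (r - pEval 1 n h) with ht
        clear_value t
        have hkey : (m:ℤ)^(n-1) • e - (m:ℤ)^n • t
            = (-v) • (pEval m n a - pEval m n b' - ((lcmN n : ℤ) * (m:ℤ)^(n-1)) • e) := by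
          rw [ht, hpa]
          match_scalars <;>
            first
              | ring1
              | linear_combination (-(m:ℤ)^(n-1)) * huv
              | linear_combination ((m:ℤ)^(n-1)) * huv
              | linear_combination ((m:ℤ)*(m:ℤ)^(n-1)) * huv
              | linear_combination (-((m:ℤ)*(m:ℤ)^(n-1))) * huv
        have hgmem : (m:ℤ)^(n-1) • e - (m:ℤ)^n • t ∈ F (k+1) := by
          rw [hkey]
          exact AddSubgroup.zsmul_mem _ hc2 _
        have h5 : (m:ℤ)^n • t ∈ F k := by
          have hrw : (m:ℤ)^n • t = (m:ℤ)^(n-1) • e - ((m:ℤ)^(n-1) • e - (m:ℤ)^n • t) := by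
            abel
          rw [hrw]
          exact AddSubgroup.sub_mem _ (AddSubgroup.zsmul_mem _ he _)
            (Fanti F hmono k (k+1) hk (by omega) hgmem)
        have htk : t ∈ F k := lemA n F htop hmono m htor k hk (by omega) n t h5
        have hg : e - (m:ℤ) • t ∈ F (k+1) := by
          apply lemA n F htop hmono m htor (k+1) (by omega) (by omega) (n-1)
          rw [smul_sub, smul_smul,
            show (m:ℤ)^(n-1) * (m:ℤ) = (m:ℤ)^n from by
              rw [← pow_succ]; congr 1; omega]
          exact hgmem
        refine ⟨h + t + h * t, ?_⟩
        have hexp : a - (b + (m:ℤ) • (h + t + h*t) + b * (h + t + h*t))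
            = (e - (m:ℤ) • t) - b' * t := by
          rw [heq, hb']
          simp only [smul_add, mul_add, add_mul, smul_mul_assoc, ← mul_assoc]
          abel
        rw [hexp]
        refine AddSubgroup.sub_mem _ hg ?_
        have hb'1 : b' ∈ F 1 := by rw [htop]; trivial
        have := hmul 1 k le_rfl hk _ hb'1 _ htk
        rwa [show 1 + k = k + 1 from by omega] at this
  obtain ⟨h, hfin⟩ := MAIN (n+1) (by omega) le_rfl
  rw [hbot] at hfin
  exact ⟨h, sub_eq_zero.mp (AddSubgroup.mem_bot.mp hfin)⟩
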